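/- Consider the polynomial parametrization of the Enneper minimal surface x(u, v) = (v(−3u² + v² + 3), u(u² − 3v² + 3), 6uv) : ℝ² → ℝ³. There exist a center M = (u0, v0) and an offset δ = (α, β) such that the two diagonals d1(t) = M + t(α, β) and d2(t) = M + t(−α, β), t ∈ [−1, 1], have different energies on the surface: ∫_{-1}^{1} |d/dt [x(d1(t))]|² dt ≠ ∫_{-1}^{1} |d/dt [x(d2(t))]|² dt. -/

import Mathlib

private def evec (a b c : ℝ) : EuclideanSpace ℝ (Fin 3) := !₂[a, b, c]

private lemma normSq_evec (a b c : ℝ) :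
    ‖evec a b c‖ ^ 2 = a ^ 2 + b ^ 2 + c ^ 2 := by
  rw [EuclideanSpace.norm_eq, Real.sq_sqrt (by positivity)]
  simp [evec, Fin.sum_univ_three]

private lemma hasDerivAt_evec (a b c : ℝ → ℝ) (a' b' c' t : ℝ)
    (ha : HasDerivAt a a' t) (hb : HasDerivAt b b' t) (hc : HasDerivAt c c' t) :
    HasDerivAt (fun s => evec (a s) (b s) (c s)) (evec a' b' c') t := by
  have hG : HasDerivAt (fun s => (![a s, b s, c s] : Fin 3 → ℝ))
      (![a', b', c'] : Fin 3 → ℝ) t := by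
    refine hasDerivAt_pi.2 fun i => ?_
    fin_cases i
    · simpa using ha
    · simpa using hb
    · simpa using hc
  exact ((PiLp.continuousLinearEquiv 2 ℝ
    (fun _ : Fin 3 => ℝ)).symm.toContinuousLinearMap.hasFDerivAt.comp_hasDerivAt t hG)

private lemma hasDerivAt_cubic (c0 c1 c2 c3 t : ℝ) :
    HasDerivAt (fun s : ℝ => c0 + c1 * s + c2 * s ^ 2 + c3 * s ^ 3)
      (c1 + 2 * c2 * t + 3 * c3 * t ^ 2) t := by
  have h := (((hasDerivAt_const t c0).add ((hasDerivAt_id t).const_mul c1)).add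
      ((hasDerivAt_pow 2 t).const_mul c2)).add ((hasDerivAt_pow 3 t).const_mul c3)
  exact h.congr_deriv (by norm_num; ring)

private lemma hasDerivAt_quintic (c1 c2 c3 c4 c5 t : ℝ) :
    HasDerivAt (fun s : ℝ => c1 * s + c2 * s ^ 2 + c3 * s ^ 3 + c4 * s ^ 4 + c5 * s ^ 5)
      (c1 + 2 * c2 * t + 3 * c3 * t ^ 2 + 4 * c4 * t ^ 3 + 5 * c5 * t ^ 4) t := by
  have h := (((((hasDerivAt_id t).const_mul c1).add
      ((hasDerivAt_pow 2 t).const_mul c2)).add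
      ((hasDerivAt_pow 3 t).const_mul c3)).add
      ((hasDerivAt_pow 4 t).const_mul c4)).add
      ((hasDerivAt_pow 5 t).const_mul c5)
  exact h.congr_deriv (by norm_num; ring)

private lemma integral_quartic (c0 c1 c2 c3 c4 : ℝ) :
    (∫ t in (-1:ℝ)..1, (c0 + c1 * t + c2 * t ^ 2 + c3 * t ^ 3 + c4 * t ^ 4))
      = 2 * c0 + 2 / 3 * c2 + 2 / 5 * c4 := by
  have h : ∀ t ∈ Set.uIcc (-1:ℝ) 1,
      HasDerivAt (fun s : ℝ => c0 * s + (c1 / 2) * s ^ 2 + (c2 / 3) * s ^ 3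
        + (c3 / 4) * s ^ 4 + (c4 / 5) * s ^ 5)
        (c0 + c1 * t + c2 * t ^ 2 + c3 * t ^ 3 + c4 * t ^ 4) t := by
    intro t _
    have := hasDerivAt_quintic c0 (c1 / 2) (c2 / 3) (c3 / 4) (c4 / 5) t
    convert this using 1
    ring
  rw [intervalIntegral.integral_eq_sub_of_hasDerivAt h
    ((Continuous.intervalIntegrable (by continuity) _ _))]
  ring

/-- For the polynomial parametrization of the Enneper minimal surface there is
a parameter-line rectangle whose two diagonals have different energies on the
surface (the line element is isothermal but not Liouville). -/
theorem enneper_polynomial_diagonals_different_energy :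
    let x : ℝ → ℝ → EuclideanSpace ℝ (Fin 3) := fun u v =>
      !₂[v * (-3 * u ^ 2 + v ^ 2 + 3), u * (u ^ 2 - 3 * v ^ 2 + 3), 6 * u * v]
    ∃ u0 v0 α β : ℝ,
      (∫ t in (-1:ℝ)..1,
          ‖deriv (fun s => x (u0 + s * α) (v0 + s * β)) t‖ ^ 2) ≠
      (∫ t in (-1:ℝ)..1,
          ‖deriv (fun s => x (u0 - s * α) (v0 + s * β)) t‖ ^ 2) := by
  intro x
  refine ⟨1, 1, 1, 1, ?_⟩
  -- diagonal 1: u = v = 1 + s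
  have e1 : (fun s : ℝ => x (1 + s * 1) (1 + s * 1)) =
      fun s : ℝ => evec (1 + (-3) * s + (-6) * s ^ 2 + (-2) * s ^ 3)
        (1 + (-3) * s + (-6) * s ^ 2 + (-2) * s ^ 3)
        (6 + 12 * s + 6 * s ^ 2 + 0 * s ^ 3) := by
    funext s
    simp only [x, evec]
    ext i
    fin_cases i <;> simp <;> ring
  -- diagonal 2: u = 1 - s, v = 1 + s
  have e2 : (fun s : ℝ => x (1 - s * 1) (1 + s * 1)) =
      fun s : ℝ => evec (1 + 9 * s + 6 * s ^ 2 + (-2) * s ^ 3)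
        (1 + (-9) * s + 6 * s ^ 2 + 2 * s ^ 3)
        (6 + 0 * s + (-6) * s ^ 2 + 0 * s ^ 3) := by
    funext s
    simp only [x, evec]
    ext i
    fin_cases i <;> simp <;> ring
  have d1 : ∀ t : ℝ, deriv (fun s => x (1 + s * 1) (1 + s * 1)) t =
      evec ((-3) + 2 * (-6) * t + 3 * (-2) * t ^ 2)
        ((-3) + 2 * (-6) * t + 3 * (-2) * t ^ 2)
        (12 + 2 * 6 * t + 3 * 0 * t ^ 2) := by
    intro t
    rw [e1]
    exact (hasDerivAt_evec _ _ _ _ _ _ t (hasDerivAt_cubic 1 (-3) (-6) (-2) t)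
      (hasDerivAt_cubic 1 (-3) (-6) (-2) t) (hasDerivAt_cubic 6 12 6 0 t)).deriv
  have d2 : ∀ t : ℝ, deriv (fun s => x (1 - s * 1) (1 + s * 1)) t =
      evec (9 + 2 * 6 * t + 3 * (-2) * t ^ 2)
        ((-9) + 2 * 6 * t + 3 * 2 * t ^ 2)
        (0 + 2 * (-6) * t + 3 * 0 * t ^ 2) := by
    intro t
    rw [e2]
    exact (hasDerivAt_evec _ _ _ _ _ _ t (hasDerivAt_cubic 1 9 6 (-2) t)
      (hasDerivAt_cubic 1 (-9) 6 2 t) (hasDerivAt_cubic 6 0 (-6) 0 t)).deriv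
  have n1 : (fun t : ℝ => ‖deriv (fun s => x (1 + s * 1) (1 + s * 1)) t‖ ^ 2) =
      fun t : ℝ => 162 + 432 * t + 504 * t ^ 2 + 288 * t ^ 3 + 72 * t ^ 4 := by
    funext t
    rw [d1 t, normSq_evec]
    ring
  have n2 : (fun t : ℝ => ‖deriv (fun s => x (1 - s * 1) (1 + s * 1)) t‖ ^ 2) =
      fun t : ℝ => 162 + 0 * t + 216 * t ^ 2 + 0 * t ^ 3 + 72 * t ^ 4 := by
    funext t
    rw [d2 t, normSq_evec]
    ring
  show (∫ t in (-1:ℝ)..1, ‖deriv (fun s => x (1 + s * 1) (1 + s * 1)) t‖ ^ 2) ≠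
      (∫ t in (-1:ℝ)..1, ‖deriv (fun s => x (1 - s * 1) (1 + s * 1)) t‖ ^ 2)
  rw [intervalIntegral.integral_congr (g := fun t : ℝ =>
        162 + 432 * t + 504 * t ^ 2 + 288 * t ^ 3 + 72 * t ^ 4)
      (fun t _ => congrFun n1 t),
    intervalIntegral.integral_congr (g := fun t : ℝ =>
        162 + 0 * t + 216 * t ^ 2 + 0 * t ^ 3 + 72 * t ^ 4)
      (fun t _ => congrFun n2 t),
    integral_quartic, integral_quartic]
  norm_num
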